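/- Let M be a finite set indexing the components of a connected fiber, and let (E_i · E_j) be a symmetric rational matrix such that E_i·E_j ≥ 0 for i ≠ j, Σ_j m_j (E_i·E_j) = 0 for all i for some positive rationals m_j (the multiplicities of the fiber), and the 'dual graph' is connected (for any partition of M into nonempty sets S, T there exist i ∈ S, j ∈ T with E_i·E_j > 0). Then for any rational vector (a_i), the quadratic form Σ_{i,j} a_i a_j (E_i·E_j) ≤ 0, with equality if and only if (a_i) is proportional to (m_i). -/

import Mathlib

/-- Combinatorial core of Zariski's lemma: a symmetric rational matrix (Eᵢ·Eⱼ) with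
nonnegative off-diagonal entries, a positive vector (mⱼ) in its kernel
(Σⱼ mⱼ(Eᵢ·Eⱼ) = 0 for all i) and connected dual graph is negative semi-definite,
with radical spanned by (mᵢ): for every rational vector (aᵢ),
Σ aᵢaⱼ(Eᵢ·Eⱼ) ≤ 0 with equality iff (aᵢ) is proportional to (mᵢ). -/
theorem zariski_matrix_lemma {M : Type*} [Fintype M] [DecidableEq M]
    (Q : M → M → ℚ) (hsym : ∀ i j, Q i j = Q j i)
    (hoff : ∀ i j, i ≠ j → 0 ≤ Q i j)
    (m : M → ℚ) (hm : ∀ j, 0 < m j)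
    (hker : ∀ i, ∑ j, m j * Q i j = 0)
    (hconn : ∀ S : Finset M, S.Nonempty → Sᶜ.Nonempty →
      ∃ i ∈ S, ∃ j ∈ Sᶜ, 0 < Q i j) :
    ∀ a : M → ℚ,
      (∑ i, ∑ j, a i * a j * Q i j ≤ 0) ∧
      ((∑ i, ∑ j, a i * a j * Q i j = 0) ↔ ∃ t : ℚ, ∀ i, a i = t * m i) := by
  intro a
  classical
  rcases isEmpty_or_nonempty M with hM | hM
  · refine ⟨by simp, ⟨fun _ => ⟨0, fun i => isEmptyElim i⟩, fun _ => by simp⟩⟩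
  set c : M → ℚ := fun i => a i / m i with hc
  have ha : ∀ i, a i = c i * m i := fun i => by
    exact (div_mul_cancel₀ (a i) (hm i).ne').symm
  set F : ℚ := ∑ i, ∑ j, m i * m j * Q i j * (c i - c j) ^ 2 with hF
  have hterm : ∀ i j, 0 ≤ m i * m j * Q i j * (c i - c j) ^ 2 := by
    intro i j
    rcases eq_or_ne i j with rfl | h
    · simp
    · have h1 := hoff i j h
      have h2 := (hm i).le
      have h3 := (hm j).le
      positivity
  have hFnn : 0 ≤ F := Finset.sum_nonneg fun i _ =>
    Finset.sum_nonneg fun j _ => hterm i j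
  have h1 : ∑ i, ∑ j, (c i ^ 2 * m i) * (m j * Q i j) = 0 := by
    refine Finset.sum_eq_zero fun i _ => ?_
    rw [← Finset.mul_sum, hker i, mul_zero]
  have h2 : ∑ i, ∑ j, (c j ^ 2 * m j) * (m i * Q j i) = 0 := by
    rw [Finset.sum_comm]
    refine Finset.sum_eq_zero fun j _ => ?_
    rw [← Finset.mul_sum, hker j, mul_zero]
  have comb : F + 2 * (∑ i, ∑ j, a i * a j * Q i j)
      = (∑ i, ∑ j, (c i ^ 2 * m i) * (m j * Q i j))
        + (∑ i, ∑ j, (c j ^ 2 * m j) * (m i * Q j i)) := by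
    rw [hF, Finset.mul_sum, ← Finset.sum_add_distrib, ← Finset.sum_add_distrib]
    refine Finset.sum_congr rfl fun i _ => ?_
    rw [Finset.mul_sum, ← Finset.sum_add_distrib, ← Finset.sum_add_distrib]
    refine Finset.sum_congr rfl fun j _ => ?_
    rw [ha i, ha j, hsym i j]
    ring
  rw [h1, h2] at comb
  refine ⟨by linarith, ⟨fun hzero => ?_, fun ⟨t, ht⟩ => ?_⟩⟩
  · -- equality case: F = 0
    have hF0 : F = 0 := by linarith
    have hterm0 : ∀ i j, i ≠ j → 0 < Q i j → c i = c j := by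
      intro i j hij hQ
      have hrow := (Finset.sum_eq_zero_iff_of_nonneg
        (fun i _ => Finset.sum_nonneg fun j _ => hterm i j)).mp
        (hF.symm.trans hF0) i (Finset.mem_univ i)
      have hij0 := (Finset.sum_eq_zero_iff_of_nonneg
        (fun j _ => hterm i j)).mp hrow j (Finset.mem_univ j)
      have hmi := hm i
      have hmj := hm j
      have hne : m i * m j * Q i j ≠ 0 := by positivity
      have hsq : (c i - c j) ^ 2 = 0 := by
        rcases mul_eq_zero.mp hij0 with h | h
        · exact absurd h hne
        · exact h
      have := pow_eq_zero_iff (n := 2) (by norm_num) |>.mp hsq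
      linarith [this]
    obtain ⟨i0⟩ := hM
    set S : Finset M := Finset.univ.filter (fun j => c j = c i0) with hS
    have hi0 : i0 ∈ S := by simp [hS]
    by_cases hSc : Sᶜ.Nonempty
    · obtain ⟨i, hiS, j, hjS, hQ⟩ := hconn S ⟨i0, hi0⟩ hSc
      have hci : c i = c i0 := (Finset.mem_filter.mp hiS).2
      have hcj : ¬ c j = c i0 := by
        have := Finset.mem_compl.mp hjS
        simpa [hS] using this
      have hij : i ≠ j := fun h => hcj (h ▸ hci)
      exact absurd ((hterm0 i j hij hQ).symm.trans hci) hcj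
    · have hall : ∀ j, c j = c i0 := by
        intro j
        by_contra h
        exact hSc ⟨j, Finset.mem_compl.mpr (by simp [hS, h])⟩
      exact ⟨c i0, fun i => by rw [ha i, hall i]⟩
  · -- a = t • m gives zero
    refine Finset.sum_eq_zero fun i _ => ?_
    have : ∀ j, a i * a j * Q i j = (t * a i) * (m j * Q i j) := fun j => by
      rw [ht j]; ring
    rw [Finset.sum_congr rfl fun j _ => this j, ← Finset.mul_sum, hker i, mul_zero]
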